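/- Let f(h) = (1+h)^{n+1} / ∏_{i=1}^m (1 + l_i h) with l_i real. Then f^{(n)}(0) = n! Σ_π ∏_{t∈π} [(-1)^{t-1}(n+1-s_t)] / [m(t,π)! · t], where the sum runs over unordered partitions π of the integer n, m(t,π) is the multiplicity of the part t in π, and s_t = Σ_i l_i^t. -/

import Mathlib

open scoped BigOperators Topology
open Finset Filter

namespace PFAux


noncomputable def A (a : ℕ → ℝ) (k : ℕ) : ℝ :=
  ∑ π : Nat.Partition k, ∏ t ∈ π.parts.toFinset,
    (a t) ^ (π.parts.count t) / (Nat.factorial (π.parts.count t) : ℝ)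

lemma A_zero (a : ℕ → ℝ) : A a 0 = 1 := by
  rw [A, Fintype.sum_unique]
  simp

lemma prod_cons_formula (a : ℕ → ℝ) (p : Multiset ℕ) (t : ℕ) :
    (∏ s ∈ (t ::ₘ p).toFinset,
        (a s) ^ ((t ::ₘ p).count s) / (Nat.factorial ((t ::ₘ p).count s) : ℝ))
      = (a t / (p.count t + 1)) *
        ∏ s ∈ p.toFinset, (a s) ^ (p.count s) / (Nat.factorial (p.count s) : ℝ) := by
  classical
  have hterm : ∀ c : ℕ, (a t) ^ (c + 1) / (Nat.factorial (c + 1) : ℝ)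
      = (a t / (c + 1)) * ((a t) ^ c / (Nat.factorial c : ℝ)) := by
    intro c
    rw [pow_succ, Nat.factorial_succ]
    have h1 : ((c:ℝ) + 1) ≠ 0 := by positivity
    have h2 : ((Nat.factorial c : ℕ) : ℝ) ≠ 0 := by
      exact_mod_cast (Nat.factorial_pos c).ne'
    field_simp
    push_cast
    ring
  by_cases ht : t ∈ p.toFinset
  · have h1 : (t ::ₘ p).toFinset = p.toFinset := by
      rw [Multiset.toFinset_cons, Finset.insert_eq_self.2 ht]
    rw [h1, ← Finset.mul_prod_erase _ _ ht, ← Finset.mul_prod_erase _ _ ht,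
      Multiset.count_cons_self, hterm, mul_assoc]
    congr 2
    refine Finset.prod_congr rfl fun s hs => ?_
    rw [Multiset.count_cons_of_ne (Finset.ne_of_mem_erase hs)]
  · have h1 : (t ::ₘ p).toFinset = insert t p.toFinset := Multiset.toFinset_cons t p
    have hc0 : p.count t = 0 := by
      rwa [Multiset.count_eq_zero, ← Multiset.mem_toFinset]
    rw [h1, Finset.prod_insert ht, Multiset.count_cons_self, hc0]
    simp only [zero_add, pow_one, Nat.factorial_one, Nat.cast_one, div_one, Nat.cast_zero]
    congr 1
    refine Finset.prod_congr rfl fun s hs => ?_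
    rw [Multiset.count_cons_of_ne]
    intro h; exact ht (h ▸ hs)

def consP {N j t : ℕ} (hN : t + j = N) (ht : 0 < t) (π : Nat.Partition j) :
    Nat.Partition N where
  parts := t ::ₘ π.parts
  parts_pos := by
    intro i hi
    rcases Multiset.mem_cons.1 hi with h | h
    · exact h ▸ ht
    · exact π.parts_pos h
  parts_sum := by rw [Multiset.sum_cons, π.parts_sum, hN]

def eraseP {N : ℕ} (t : ℕ) (π : Nat.Partition N) (htm : t ∈ π.parts) :
    Nat.Partition (N - t) where
  parts := π.parts.erase t
  parts_pos := fun hi => π.parts_pos (Multiset.mem_of_mem_erase hi)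
  parts_sum := by
    have h : π.parts = t ::ₘ π.parts.erase t := (Multiset.cons_erase htm).symm
    have h2 : t + (π.parts.erase t).sum = N := by
      rw [← Multiset.sum_cons, ← h, π.parts_sum]
    omega

lemma A_rec (a : ℕ → ℝ) (k : ℕ) :
    ((k : ℝ) + 1) * A a (k + 1) =
      ∑ j ∈ Finset.range (k + 1), ((j : ℝ) + 1) * a (j + 1) * A a (k - j) := by
  classical
  have step1 : ∀ π : Nat.Partition (k + 1),
      ((k : ℝ) + 1) = ∑ t ∈ π.parts.toFinset, ((π.parts.count t : ℝ) * t) := by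
    intro π
    have h1 : π.parts.sum = ∑ t ∈ π.parts.toFinset, π.parts.count t * t := by
      conv_lhs => rw [← Multiset.map_id π.parts]
      rw [Finset.sum_multiset_map_count]
      simp [smul_eq_mul]
    have h2 := π.parts_sum
    have h3 : k + 1 = ∑ t ∈ π.parts.toFinset, π.parts.count t * t := by omega
    have h4 := congrArg (Nat.cast (R := ℝ)) h3
    push_cast at h4
    exact h4
  calc ((k : ℝ) + 1) * A a (k + 1)
      = ∑ π : Nat.Partition (k + 1), ∑ t ∈ Finset.Icc 1 (k + 1),
          ((π.parts.count t : ℝ) * t) * ∏ s ∈ π.parts.toFinset,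
            (a s) ^ (π.parts.count s) / (Nat.factorial (π.parts.count s) : ℝ) := by
        rw [A, Finset.mul_sum]
        refine Finset.sum_congr rfl fun π _ => ?_
        rw [step1 π, Finset.sum_mul]
        refine Finset.sum_subset ?_ ?_
        · intro t htm
          rw [Multiset.mem_toFinset] at htm
          exact Finset.mem_Icc.2 ⟨π.parts_pos htm,
            (Multiset.single_le_sum (fun x _ => Nat.zero_le x) t htm).trans_eq π.parts_sum⟩
        · intro t _ htm
          rw [Multiset.mem_toFinset] at htm
          rw [Multiset.count_eq_zero_of_notMem htm]
          simp
    _ = ∑ t ∈ Finset.Icc 1 (k + 1), ∑ π : Nat.Partition (k + 1),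
          ((π.parts.count t : ℝ) * t) * ∏ s ∈ π.parts.toFinset,
            (a s) ^ (π.parts.count s) / (Nat.factorial (π.parts.count s) : ℝ) :=
        Finset.sum_comm
    _ = ∑ t ∈ Finset.Icc 1 (k + 1), (t : ℝ) * a t * A a (k + 1 - t) := by
        refine Finset.sum_congr rfl fun t htI => ?_
        rw [Finset.mem_Icc] at htI
        have ht0 : 0 < t := htI.1
        have htk : t + (k + 1 - t) = k + 1 := by omega
        rw [A, Finset.mul_sum]
        rw [← Finset.sum_filter_of_ne (p := fun π : Nat.Partition (k+1) => t ∈ π.parts)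
          (fun π _ hne => by
            by_contra hmem
            apply hne
            rw [Multiset.count_eq_zero_of_notMem hmem]
            simp)]
        refine Finset.sum_bij' (i := fun π hπ => eraseP t π (Finset.mem_filter.1 hπ).2)
          (j := fun π' _ => consP htk ht0 π') ?_ ?_ ?_ ?_ ?_
        · intro π hπ; exact Finset.mem_univ _
        · intro π' hπ'
          refine Finset.mem_filter.2 ⟨Finset.mem_univ _, ?_⟩
          exact Multiset.mem_cons_self t _
        · intro π hπ
          apply Nat.Partition.ext
          exact Multiset.cons_erase (Finset.mem_filter.1 hπ).2
        · intro π' hπ'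
          apply Nat.Partition.ext
          exact Multiset.erase_cons_head t _
        · intro π hπ
          have hmem := (Finset.mem_filter.1 hπ).2
          have hp : π.parts = t ::ₘ π.parts.erase t := (Multiset.cons_erase hmem).symm
          have hE : (eraseP t π hmem).parts = π.parts.erase t := rfl
          conv_lhs => rw [hp]  -- hope it rewrites counts and product
          rw [prod_cons_formula, Multiset.count_cons_self, hE]
          have hc : ((π.parts.erase t).count t : ℝ) + 1 ≠ 0 := by positivity
          push_cast
          field_simp
    _ = ∑ j ∈ Finset.range (k + 1), ((j : ℝ) + 1) * a (j + 1) * A a (k - j) := by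
        refine Finset.sum_nbij' (i := fun t => t - 1) (j := fun j => j + 1) ?_ ?_ ?_ ?_ ?_
        · intro t ht; rw [Finset.mem_Icc] at ht
          exact Finset.mem_range.2 (by omega)
        · intro j hj; rw [Finset.mem_range] at hj
          exact Finset.mem_Icc.2 (by omega)
        · intro t ht; rw [Finset.mem_Icc] at ht; omega
        · intro j _; omega
        · intro t ht
          rw [Finset.mem_Icc] at ht
          have h1 : t - 1 + 1 = t := by omega
          have h2 : k - (t - 1) = k + 1 - t := by omega
          rw [h1, h2]
          rw [Nat.cast_sub ht.1]
          push_cast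
          ring_nf

lemma W_rec (d : ℕ → ℝ) (a b : ℕ → ℝ)
    (ha : ∀ t, a t = (-1 : ℝ) ^ (t - 1) * d t / t)
    (hb : ∀ r, b r = (-1 : ℝ) ^ r * (Nat.factorial r : ℝ) * d (r + 1)) (k : ℕ) :
    ((Nat.factorial (k + 1) : ℝ)) * A a (k + 1)
      = ∑ j ∈ Finset.range (k + 1), (k.choose j : ℝ) *
          (((Nat.factorial j : ℝ) * A a j) * b (k - j)) := by
  calc ((Nat.factorial (k + 1) : ℝ)) * A a (k + 1)
      = (Nat.factorial k : ℝ) * (((k : ℝ) + 1) * A a (k + 1)) := by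
        rw [Nat.factorial_succ]; push_cast; ring
    _ = ∑ j ∈ Finset.range (k + 1),
          (Nat.factorial k : ℝ) * (((j : ℝ) + 1) * a (j + 1) * A a (k - j)) := by
        rw [A_rec, Finset.mul_sum]
    _ = ∑ j ∈ Finset.range (k + 1), (k.choose (k - j) : ℝ) *
          (((Nat.factorial (k - j) : ℝ) * A a (k - j)) * b (k - (k - j))) := by
        refine Finset.sum_congr rfl fun j hj => ?_
        have hj' : j ≤ k := by
          have := Finset.mem_range.1 hj; omega
        rw [Nat.sub_sub_self hj', Nat.choose_symm hj', ha, hb]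
        have h0 : (k.choose j : ℝ) * (Nat.factorial j : ℝ) * (Nat.factorial (k - j) : ℝ)
            = (Nat.factorial k : ℝ) := by
          exact_mod_cast congrArg (Nat.cast (R := ℝ))
            (Nat.choose_mul_factorial_mul_factorial hj')
        rw [← h0]
        have h1 : (j : ℝ) + 1 ≠ 0 := by positivity
        rw [Nat.add_sub_cancel]
        push_cast
        field_simp
    _ = ∑ j ∈ Finset.range (k + 1), (k.choose j : ℝ) *
          (((Nat.factorial j : ℝ) * A a j) * b (k - j)) := by
        rw [← Finset.sum_range_reflect
          (fun j => (k.choose j : ℝ) * (((Nat.factorial j : ℝ) * A a j) * b (k - j))) (k + 1)]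
        refine Finset.sum_congr rfl fun j hj => ?_
        have hj' : j ≤ k := by
          have := Finset.mem_range.1 hj; omega
        have : k + 1 - 1 - j = k - j := by omega
        rw [this]

lemma rec_eq {b X Y : ℕ → ℝ} (h0 : X 0 = Y 0)
    (hX : ∀ k, X (k + 1) = ∑ j ∈ Finset.range (k + 1),
      (k.choose j : ℝ) * (X j * b (k - j)))
    (hY : ∀ k, Y (k + 1) = ∑ j ∈ Finset.range (k + 1),
      (k.choose j : ℝ) * (Y j * b (k - j))) :
    ∀ k, X k = Y k := by
  intro k
  induction k using Nat.strong_induction_on with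
  | _ k ih =>
    match k with
    | 0 => exact h0
    | k + 1 =>
      rw [hX, hY]
      refine Finset.sum_congr rfl fun j hj => ?_
      rw [ih j (by have := Finset.mem_range.1 hj; omega)]



variable {m : ℕ}

def U (l : Fin m → ℝ) : Set ℝ := {x | 1 + x ≠ 0 ∧ ∀ i, 1 + l i * x ≠ 0}

lemma isOpen_U (l : Fin m → ℝ) : IsOpen (U l) := by
  have h : U l = {x : ℝ | 1 + x ≠ 0} ∩ ⋂ i, {x : ℝ | 1 + l i * x ≠ 0} := by
    ext x; simp [U, Set.mem_iInter]
  rw [h]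
  refine IsOpen.inter ?_ (isOpen_iInter_of_finite fun i => ?_)
  · exact isOpen_ne_fun (by fun_prop) (by fun_prop)
  · exact isOpen_ne_fun (by fun_prop) (by fun_prop)

lemma zero_mem_U (l : Fin m → ℝ) : 0 ∈ U l := by
  constructor <;> simp

-- smoothness of iterated derivatives on open sets
lemma contDiffOn_iteratedDeriv {V : Set ℝ} (hV : IsOpen V) {u : ℝ → ℝ}
    (hu : ContDiffOn ℝ (⊤ : ℕ∞) u V) (j : ℕ) :
    ContDiffOn ℝ (⊤ : ℕ∞) (iteratedDeriv j u) V := by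
  induction j generalizing u with
  | zero => simpa [iteratedDeriv_zero] using hu
  | succ j ih =>
    rw [iteratedDeriv_succ']
    exact ih (hu.deriv_of_isOpen hV (by exact_mod_cast le_top))

lemma differentiableAt_iteratedDeriv {V : Set ℝ} (hV : IsOpen V) {u : ℝ → ℝ}
    (hu : ContDiffOn ℝ (⊤ : ℕ∞) u V) (j : ℕ) {x : ℝ} (hx : x ∈ V) :
    DifferentiableAt ℝ (iteratedDeriv j u) x := by
  have h := (contDiffOn_iteratedDeriv hV hu j).contDiffAt (hV.mem_nhds hx)
  exact h.differentiableAt (by simp)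

-- Leibniz formula
lemma iteratedDeriv_mul {V : Set ℝ} (hV : IsOpen V) {u v : ℝ → ℝ}
    (hu : ContDiffOn ℝ (⊤ : ℕ∞) u V) (hv : ContDiffOn ℝ (⊤ : ℕ∞) v V) (k : ℕ) :
    ∀ x ∈ V, iteratedDeriv k (fun y => u y * v y) x
      = ∑ j ∈ Finset.range (k + 1), (k.choose j : ℝ) *
          (iteratedDeriv j u x * iteratedDeriv (k - j) v x) := by
  induction k with
  | zero => intro x hx; simp
  | succ k ih =>
    intro x hx
    have hev : iteratedDeriv k (fun y => u y * v y) =ᶠ[𝓝 x]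
        fun y => ∑ j ∈ Finset.range (k + 1), (k.choose j : ℝ) *
          (iteratedDeriv j u y * iteratedDeriv (k - j) v y) := by
      filter_upwards [hV.mem_nhds hx] with y hy using ih y hy
    rw [iteratedDeriv_succ, hev.deriv_eq]
    have hterm : ∀ j ∈ Finset.range (k + 1), HasDerivAt
        (fun y => (k.choose j : ℝ) * (iteratedDeriv j u y * iteratedDeriv (k - j) v y))
        ((k.choose j : ℝ) * (iteratedDeriv (j + 1) u x * iteratedDeriv (k - j) v x
          + iteratedDeriv j u x * iteratedDeriv (k - j + 1) v x)) x := by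
      intro j _
      have hdu : HasDerivAt (iteratedDeriv j u) (iteratedDeriv (j + 1) u x) x := by
        rw [iteratedDeriv_succ]
        exact (differentiableAt_iteratedDeriv hV hu j hx).hasDerivAt
      have hdv : HasDerivAt (iteratedDeriv (k - j) v) (iteratedDeriv (k - j + 1) v x) x := by
        rw [iteratedDeriv_succ]
        exact (differentiableAt_iteratedDeriv hV hv (k - j) hx).hasDerivAt
      exact (hdu.mul hdv).const_mul (k.choose j : ℝ)
    have hsum := HasDerivAt.fun_sum hterm
    rw [hsum.deriv]
    rw [Finset.sum_choose_succ_mul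
      (fun i j => iteratedDeriv i u x * iteratedDeriv j v x) k]
    rw [← Finset.sum_add_distrib]
    refine Finset.sum_congr rfl fun j hj => ?_
    have h1 : k + 1 - j = k - j + 1 := by
      have := Finset.mem_range.1 hj; omega
    rw [h1]
    ring

noncomputable def gfun (nn : ℕ) (l : Fin m → ℝ) : ℝ → ℝ :=
  fun x => ((nn : ℝ) + 1) * (1 + x)⁻¹ - ∑ i, l i * (1 + l i * x)⁻¹

lemma contDiffOn_f (l : Fin m → ℝ) (nn : ℕ) :
    ContDiffOn ℝ (⊤ : ℕ∞) (fun h : ℝ => (1 + h) ^ (nn + 1) / ∏ i, (1 + l i * h)) (U l) := by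
  refine ContDiffOn.div ?_ ?_ ?_
  · exact ((contDiff_const.add contDiff_id).pow (nn + 1)).contDiffOn
  · exact (contDiff_prod fun i _ =>
      contDiff_const.add (contDiff_const.mul contDiff_id)).contDiffOn
  · intro x hx
    exact Finset.prod_ne_zero_iff.2 fun i _ => hx.2 i

lemma contDiffOn_g (l : Fin m → ℝ) (nn : ℕ) :
    ContDiffOn ℝ (⊤ : ℕ∞) (gfun nn l) (U l) := by
  refine ContDiffOn.sub ?_ ?_
  · exact contDiffOn_const.mul
      (((contDiff_const.add contDiff_id).contDiffOn).inv fun x hx => hx.1)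
  · exact ContDiffOn.sum fun i _ => contDiffOn_const.mul
      (((contDiff_const.add (contDiff_const.mul contDiff_id)).contDiffOn).inv
        fun x hx => hx.2 i)

lemma hasDerivAt_f (l : Fin m → ℝ) (nn : ℕ) {x : ℝ} (hx : x ∈ U l) :
    HasDerivAt (fun h : ℝ => (1 + h) ^ (nn + 1) / ∏ i, (1 + l i * h))
      (((1 + x) ^ (nn + 1) / ∏ i, (1 + l i * x)) * gfun nn l x) x := by
  have h1x : (1 : ℝ) + x ≠ 0 := hx.1
  have hfac : ∀ i, (1 : ℝ) + l i * x ≠ 0 := hx.2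
  have hB0 : (∏ i, (1 + l i * x)) ≠ 0 := Finset.prod_ne_zero_iff.2 fun i _ => hfac i
  have hA : HasDerivAt (fun h : ℝ => (1 + h) ^ (nn + 1))
      (((nn : ℝ) + 1) * (1 + x) ^ nn) x := by
    have := ((hasDerivAt_id x).const_add 1).pow (nn + 1)
    simpa [Pi.pow_def] using this
  have hB : HasDerivAt (fun h : ℝ => ∏ i, (1 + l i * h))
      (∑ i, (∏ j ∈ Finset.univ.erase i, (1 + l j * x)) • l i) x := by
    refine HasDerivAt.fun_finsetProd fun i _ => ?_
    simpa using ((hasDerivAt_id x).const_mul (l i)).const_add 1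
  have hdiv := hA.fun_div hB hB0
  refine hdiv.congr_deriv ?_
  have herase : ∀ i : Fin m, (∏ j ∈ Finset.univ.erase i, (1 + l j * x))
      = (1 + l i * x)⁻¹ * ∏ j, (1 + l j * x) := by
    intro i
    rw [← Finset.mul_prod_erase Finset.univ _ (Finset.mem_univ i)]
    rw [← mul_assoc, inv_mul_cancel₀ (hfac i), one_mul]
  have hsum : (∑ i, (∏ j ∈ Finset.univ.erase i, (1 + l j * x)) • l i)
      = (∏ j, (1 + l j * x)) * ∑ i, l i * (1 + l i * x)⁻¹ := by
    rw [Finset.mul_sum]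
    refine Finset.sum_congr rfl fun i _ => ?_
    rw [herase i, smul_eq_mul]
    ring
  rw [hsum, gfun]
  field_simp
  ring

lemma iteratedDeriv_g (l : Fin m → ℝ) (nn : ℕ) (r : ℕ) :
    ∀ x ∈ U l, iteratedDeriv r (gfun nn l) x
      = (-1 : ℝ) ^ r * (Nat.factorial r : ℝ) *
          (((nn : ℝ) + 1) * ((1 + x)⁻¹) ^ (r + 1)
            - ∑ i, (l i) ^ (r + 1) * ((1 + l i * x)⁻¹) ^ (r + 1)) := by
  induction r with
  | zero =>
    intro x hx
    simp [gfun]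
  | succ r ih =>
    intro x hx
    have hev : iteratedDeriv r (gfun nn l) =ᶠ[𝓝 x]
        fun y => (-1 : ℝ) ^ r * (Nat.factorial r : ℝ) *
          (((nn : ℝ) + 1) * ((1 + y)⁻¹) ^ (r + 1)
            - ∑ i, (l i) ^ (r + 1) * ((1 + l i * y)⁻¹) ^ (r + 1)) := by
      filter_upwards [(isOpen_U l).mem_nhds hx] with y hy using ih y hy
    rw [iteratedDeriv_succ, hev.deriv_eq]
    have hA : HasDerivAt (fun y : ℝ => ((1 + y)⁻¹) ^ (r + 1))
        (-(((r : ℝ) + 1)) * ((1 + x)⁻¹) ^ (r + 2)) x := by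
      have h1 : HasDerivAt (fun y : ℝ => 1 + y) 1 x := (hasDerivAt_id x).const_add 1
      have h3 := (h1.inv hx.1).pow (r + 1)
      simp only [Pi.pow_def, Pi.inv_def] at h3
      refine h3.congr_deriv ?_
      simp only [Nat.add_sub_cancel]
      rw [div_eq_mul_inv, ← inv_pow]
      push_cast
      ring
    have hBi : ∀ i : Fin m, HasDerivAt (fun y : ℝ => ((1 + l i * y)⁻¹) ^ (r + 1))
        (-(l i * ((r : ℝ) + 1)) * ((1 + l i * x)⁻¹) ^ (r + 2)) x := by
      intro i
      have h1 : HasDerivAt (fun y : ℝ => 1 + l i * y) (l i) x := by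
        simpa using ((hasDerivAt_id x).const_mul (l i)).const_add 1
      have h3 := (h1.inv (hx.2 i)).pow (r + 1)
      simp only [Pi.pow_def, Pi.inv_def] at h3
      refine h3.congr_deriv ?_
      simp only [Nat.add_sub_cancel]
      rw [div_eq_mul_inv, ← inv_pow]
      push_cast
      ring
    have hD := ((hA.const_mul ((nn : ℝ) + 1)).fun_sub
      (HasDerivAt.fun_sum (u := Finset.univ) fun i _ => (hBi i).const_mul ((l i) ^ (r + 1)))).const_mul
      ((-1 : ℝ) ^ r * (Nat.factorial r : ℝ))
    rw [hD.deriv]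
    have hsum : (∑ i, (l i) ^ (r + 1) * (-(l i * ((r : ℝ) + 1)) * ((1 + l i * x)⁻¹) ^ (r + 2)))
        = -(((r : ℝ) + 1)) * ∑ i, (l i) ^ (r + 2) * ((1 + l i * x)⁻¹) ^ (r + 2) := by
      rw [Finset.mul_sum]
      refine Finset.sum_congr rfl fun i _ => ?_
      rw [pow_succ]
      ring
    rw [hsum, Nat.factorial_succ]
    push_cast
    ring


end PFAux

open scoped BigOperators

/-- Let `f(h) = (1+h)^{n+1} / ∏ᵢ (1 + lᵢ h)` with the `lᵢ` real.  Then
`f^{(n)}(0) = n! Σ_π ∏_{t ∈ π} [(−1)^{t−1}(n+1−s_t)]^{m(t,π)} / [m(t,π)! · t^{m(t,π)}]`,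
where the sum runs over the (unordered) partitions `π` of the integer `n`,
`m(t,π)` is the multiplicity of the part `t` in `π`, and `s_t = Σᵢ lᵢᵗ`
(the inner product is taken over the distinct parts `t` of `π`). -/
theorem iteratedDeriv_ratio_at_zero_partition_formula
    {n m : ℕ} (l : Fin m → ℝ)
    (f : ℝ → ℝ)
    (hf : f = fun h => (1 + h) ^ (n + 1) / ∏ i, (1 + l i * h)) :
    iteratedDeriv n f 0
      = (Nat.factorial n : ℝ) *
          ∑ π : Nat.Partition n,
            ∏ t ∈ π.parts.toFinset,
              ((-1 : ℝ) ^ (t - 1) * ((n : ℝ) + 1 - ∑ i, (l i) ^ t) / (t : ℝ))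
                  ^ (π.parts.count t)
                / (Nat.factorial (π.parts.count t) : ℝ) := by
  classical
  subst hf
  set a : ℕ → ℝ := fun t => (-1 : ℝ) ^ (t - 1) * ((n : ℝ) + 1 - ∑ i, (l i) ^ t) / (t : ℝ)
    with ha_def
  set b : ℕ → ℝ := fun r => (-1 : ℝ) ^ r * (Nat.factorial r : ℝ) *
    (((n : ℝ) + 1) - ∑ i, (l i) ^ (r + 1)) with hb_def
  set F : ℝ → ℝ := fun h => (1 + h) ^ (n + 1) / ∏ i, (1 + l i * h) with hF_def
  have hX0 : iteratedDeriv 0 F 0 = 1 := by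
    rw [iteratedDeriv_zero, hF_def]
    simp
  have hXrec : ∀ k, iteratedDeriv (k + 1) F 0 =
      ∑ j ∈ Finset.range (k + 1), (k.choose j : ℝ) *
        (iteratedDeriv j F 0 * b (k - j)) := by
    intro k
    rw [iteratedDeriv_succ']
    have hev : deriv F =ᶠ[𝓝 (0 : ℝ)] fun y => F y * PFAux.gfun n l y := by
      filter_upwards [(PFAux.isOpen_U l).mem_nhds (PFAux.zero_mem_U l)] with y hy
      exact (PFAux.hasDerivAt_f l n hy).deriv
    rw [Filter.EventuallyEq.iteratedDeriv_eq k hev]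
    rw [PFAux.iteratedDeriv_mul (PFAux.isOpen_U l) (PFAux.contDiffOn_f l n)
      (PFAux.contDiffOn_g l n) k 0 (PFAux.zero_mem_U l)]
    refine Finset.sum_congr rfl fun j _ => ?_
    have hg0 := PFAux.iteratedDeriv_g l n (k - j) 0 (PFAux.zero_mem_U l)
    rw [hg0, hb_def]
    norm_num
    exact Or.inl (Or.inl rfl)
  have hY0 : (Nat.factorial 0 : ℝ) * PFAux.A a 0 = 1 := by
    rw [PFAux.A_zero]
    simp
  have hYrec : ∀ k, (Nat.factorial (k + 1) : ℝ) * PFAux.A a (k + 1) =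
      ∑ j ∈ Finset.range (k + 1), (k.choose j : ℝ) *
        (((Nat.factorial j : ℝ) * PFAux.A a j) * b (k - j)) := by
    intro k
    refine PFAux.W_rec (fun t => ((n : ℝ) + 1) - ∑ i, (l i) ^ t) a b ?_ ?_ k
    · intro t; rw [ha_def]
    · intro r; rw [hb_def]
  have key : ∀ k, iteratedDeriv k F 0 = (Nat.factorial k : ℝ) * PFAux.A a k := by
    refine PFAux.rec_eq (b := b) (by rw [hX0, hY0]) hXrec hYrec
  rw [key n, PFAux.A]
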